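/- arXiv:2002.11923 — 3 statements merged into one kernel-verified Lean document; each statement's English description precedes it below -/
import Mathlib

section
/- Let a > 0, δ ≥ 0, and suppose a ≥ ρ > 0 where δ = ε(D+ρ)² with ε = (1/5)·ε₀/(E+1), E = D²/ρ², D ≥ 0, ε₀ ∈ (0,1). If a real number a' satisfies a' ≥ (2a² − 3δ)/(2√(a²+δ)), then a' ≥ (1 − ε₀)·ρ. -/
/-- Combining the triangle preservation bound with the parameter choice:
`a' ≥ (2a² − 3δ)/(2√(a²+δ))` implies `a' ≥ (1 − ε₀)ρ`. -/
theorem margin_preservation_step (a δ ρ ε E D ε₀ a' : ℝ)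
    (ha : 0 < a) (hδnn : 0 ≤ δ) (haρ : a ≥ ρ) (hρ : 0 < ρ)
    (hD : 0 ≤ D) (hε₀ : 0 < ε₀ ∧ ε₀ < 1)
    (hE : E = D ^ 2 / ρ ^ 2) (hε : ε = (1 / 5) * ε₀ / (E + 1))
    (hδ : δ = ε * (D + ρ) ^ 2)
    (ha' : a' ≥ (2 * a ^ 2 - 3 * δ) / (2 * Real.sqrt (a ^ 2 + δ))) :
    a' ≥ (1 - ε₀) * ρ := by
  obtain ⟨hε₀pos, hε₀lt⟩ := hε₀
  set s := Real.sqrt (a ^ 2 + δ) with hs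
  have hspos : 0 < s := Real.sqrt_pos.mpr (by positivity)
  have hs2 : s ^ 2 = a ^ 2 + δ := Real.sq_sqrt (by positivity)
  have hsρ : ρ ≤ s := by
    nlinarith [hs2, hspos, hρ, haρ, hδnn]
  -- key: 5δ ≤ 2 ε₀ ρ²
  have hδle : 5 * δ ≤ 2 * ε₀ * ρ ^ 2 := by
    have hE' : E * ρ ^ 2 = D ^ 2 := by rw [hE]; field_simp
    have hE1 : (0:ℝ) < E + 1 := by rw [hE]; positivity
    have hδ' : δ * (E + 1) * 5 = ε₀ * (D + ρ) ^ 2 := by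
      rw [hδ, hε]; field_simp
    nlinarith [mul_nonneg (le_of_lt hε₀pos) (sq_nonneg (D - ρ)), hE', hδ', hE1]
  have hmain : (1 - ε₀) * ρ ≤ (2 * a ^ 2 - 3 * δ) / (2 * s) := by
    rw [le_div_iff₀ (by positivity)]
    nlinarith [sq_nonneg (s - ρ), mul_nonneg (mul_nonneg (le_of_lt hε₀pos) (le_of_lt hρ)) (sub_nonneg.mpr hsρ), hs2, haρ, hδle, hδnn]
  linarith
end

section
/- Let S ⊂ ℝᵈ be finite, ε ∈ (0,1), and let x ∈ conv(S) with x ≠ 0 be an ε-approximation of the polytope distance from the origin o to S, i.e., ‖x‖ ≤ (1/(1−ε))·⟨p, x⟩/‖x‖ for all p ∈ S. Let y = (1−ε)x. Then every p ∈ S satisfies ⟨p, y⟩ ≥ ‖y‖², i.e., the hyperplane through y orthogonal to y separates o from S, and ‖y‖ ≥ (1−ε)·ρ* where ρ* is the maximum width of a margin separating o and S (equivalently ρ* = min_{z∈conv(S)}‖z‖). -/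
/-- Proposition 3.2(ii): if `x ∈ conv(S)` is an ε-approximation of the polytope
distance from the origin to `S` and `y = (1−ε)x`, then the hyperplane through
`y` orthogonal to `y` separates the origin from `S`, and `‖y‖ ≥ (1−ε)·ρ*` where
`ρ* = min_{z ∈ conv(S)} ‖z‖` is the maximum separating margin width. -/
theorem eps_approx_separating_margin {d : ℕ} (S : Finset (EuclideanSpace ℝ (Fin d)))
    (ε : ℝ) (hε : 0 < ε ∧ ε < 1)
    (x : EuclideanSpace ℝ (Fin d))
    (hx : x ∈ convexHull ℝ (S : Set (EuclideanSpace ℝ (Fin d)))) (hx0 : x ≠ 0)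
    (happrox : ∀ p ∈ S, ‖x‖ ≤ (1 / (1 - ε)) * ((inner ℝ p x : ℝ) / ‖x‖))
    (y : EuclideanSpace ℝ (Fin d)) (hy : y = (1 - ε) • x)
    (ρstar : ℝ)
    (hρ : IsLeast {r : ℝ | ∃ z ∈ convexHull ℝ (S : Set (EuclideanSpace ℝ (Fin d))), ‖z‖ = r} ρstar) :
    (∀ p ∈ S, (inner ℝ p y : ℝ) ≥ ‖y‖ ^ 2) ∧ ‖y‖ ≥ (1 - ε) * ρstar := by
  obtain ⟨hε0, hε1⟩ := hε
  have h1ε : (0 : ℝ) < 1 - ε := by linarith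
  have hxpos : (0 : ℝ) < ‖x‖ := norm_pos_iff.mpr hx0
  constructor
  · intro p hp
    have h := happrox p hp
    have hkey : (1 - ε) * ‖x‖ ^ 2 ≤ (inner ℝ p x : ℝ) := by
      generalize hT : (inner ℝ p x : ℝ) = t at h ⊢
      rw [one_div, inv_mul_eq_div] at h
      have h2 := (le_div_iff₀ h1ε).mp h
      have h3 := (le_div_iff₀ hxpos).mp h2
      nlinarith
    have hip : (inner ℝ p y : ℝ) = (1 - ε) * (inner ℝ p x : ℝ) := by
      rw [hy, inner_smul_right]
    have hny : ‖y‖ = (1 - ε) * ‖x‖ := by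
      rw [hy, norm_smul, Real.norm_eq_abs, abs_of_pos h1ε]
    rw [hip, hny]
    nlinarith
  · have hρx : ρstar ≤ ‖x‖ := hρ.2 ⟨x, hx, rfl⟩
    have hny : ‖y‖ = (1 - ε) * ‖x‖ := by
      rw [hy, norm_smul, Real.norm_eq_abs, abs_of_pos h1ε]
    rw [hny]
    nlinarith
end

section
/- Suppose f : ℝᵈ → ℝ^m is a linear map, C ⊂ ℝᵈ is finite, ε ∈ (0,1), and for every p ∈ C and q ∈ conv(C), |‖p−q‖² − ‖f(p)−f(q)‖²| ≤ ε·rad(C)². Let c̄ ∈ conv(f(C)) with c̄ = Σ_{q∈f(C)} α_q q (a convex combination), and define c = Σ α_q f⁻¹(q) ∈ conv(C) (where f⁻¹ maps f(p) back to p for p ∈ C, assuming f is injective on C). Then for every p ∈ C: ‖p − c‖² ≤ (1/(1−ε))·max_{q'∈C} ‖f(q') − c̄‖². -/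
/-- The minimum enclosing ball radius of a finite set `T`. -/
noncomputable def rad {d : ℕ} (T : Set (EuclideanSpace ℝ (Fin d))) : ℝ :=
  sInf {r : ℝ | ∃ z, ∀ t ∈ T, dist t z ≤ r}

/-- Recovery step: if the linear map `f` distorts squared distances between
points of `C` and points of `conv(C)` by at most `ε·rad(C)²`, `c̄ ∈ conv(f(C))`,
and `c ∈ conv(C)` is the recovered point with `f(c) = c̄`, then every `p ∈ C`
satisfies `‖p − c‖² ≤ (1/(1−ε))·max_{q' ∈ C} ‖f(q') − c̄‖²`. -/
theorem recovered_center_bound {d m : ℕ} (ε : ℝ) (hε : 0 < ε ∧ ε < 1)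
    (f : EuclideanSpace ℝ (Fin d) →ₗ[ℝ] EuclideanSpace ℝ (Fin m))
    (C : Finset (EuclideanSpace ℝ (Fin d))) (hC : C.Nonempty)
    (hinj : Set.InjOn f (C : Set (EuclideanSpace ℝ (Fin d))))
    (hdistort : ∀ p ∈ C, ∀ q ∈ convexHull ℝ (C : Set (EuclideanSpace ℝ (Fin d))),
      |‖p - q‖ ^ 2 - ‖f p - f q‖ ^ 2| ≤ ε * rad (C : Set (EuclideanSpace ℝ (Fin d))) ^ 2)
    (cbar : EuclideanSpace ℝ (Fin m))
    (hcbar : cbar ∈ convexHull ℝ (f '' (C : Set (EuclideanSpace ℝ (Fin d)))))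
    (c : EuclideanSpace ℝ (Fin d))
    (hc : c ∈ convexHull ℝ (C : Set (EuclideanSpace ℝ (Fin d))))
    (hfc : f c = cbar) :
    ∀ p ∈ C, ‖p - c‖ ^ 2 ≤ (1 / (1 - ε)) * C.sup' hC (fun q' => ‖f q' - cbar‖ ^ 2) := by
  obtain ⟨hε0, hε1⟩ := hε
  set R := rad (C : Set (EuclideanSpace ℝ (Fin d))) with hR
  set M := C.sup' hC (fun q' => ‖f q' - cbar‖ ^ 2) with hM
  -- the set of enclosing radii is bounded below by 0
  have hbdd : BddBelow {r : ℝ | ∃ z, ∀ t ∈ (C : Set (EuclideanSpace ℝ (Fin d))), dist t z ≤ r} := by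
    refine ⟨0, ?_⟩
    rintro r ⟨z, hz⟩
    obtain ⟨t, ht⟩ := hC
    exact le_trans dist_nonneg (hz t ht)
  -- rad is nonnegative
  have hR0 : 0 ≤ R := by
    apply le_csInf
    · exact ⟨C.sup' hC (fun s => dist s c), c, fun t ht => Finset.le_sup' (fun s => dist s c) ht⟩
    · rintro r ⟨z, hz⟩
      obtain ⟨t, ht⟩ := hC
      exact le_trans dist_nonneg (hz t ht)
  -- rad ≤ max distance to c
  have hRle : R ≤ C.sup' hC (fun t => dist t c) := by
    apply csInf_le hbdd
    exact ⟨c, fun t ht => Finset.le_sup' (fun t => dist t c) ht⟩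
  -- a point achieving the max distance to c
  obtain ⟨q0, hq0C, hq0⟩ := Finset.exists_mem_eq_sup' hC (fun t => dist t c)
  have hq0R : R ≤ ‖q0 - c‖ := by
    rw [← dist_eq_norm]
    exact hRle.trans_eq hq0
  have hq0R2 : R ^ 2 ≤ ‖q0 - c‖ ^ 2 := by
    have := norm_nonneg (q0 - c)
    nlinarith
  -- distortion at q0 gives lower bound on M
  have hd0 := hdistort q0 hq0C c hc
  have habs0 := abs_le.mp hd0
  have hM0 : ‖f q0 - cbar‖ ^ 2 ≤ M := by
    rw [hM]
    exact Finset.le_sup' (fun q' => ‖f q' - cbar‖ ^ 2) hq0C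
  rw [hfc] at habs0
  have hMlb : (1 - ε) * R ^ 2 ≤ M := by nlinarith [habs0.1]
  intro p hp
  have hd := hdistort p hp c hc
  have habs := abs_le.mp hd
  rw [hfc] at habs
  have hMp : ‖f p - cbar‖ ^ 2 ≤ M :=
    Finset.le_sup' (fun q' => ‖f q' - cbar‖ ^ 2) hp
  have h1ε : 0 < 1 - ε := by linarith
  rw [div_mul_eq_mul_div, one_mul, le_div_iff₀ h1ε]
  nlinarith [habs.2]
end
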